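/- Let a, b be natural numbers and let X = {α ⊕ b : α ∈ ℕ, α < a} ∪ {a ⊕ β : β ∈ ℕ, β < b} (where ⊕ denotes the Nim sum). Then a ⊕ b is the smallest element of ℕ \ X; that is, a ⊕ b ∉ X and every natural number c < a ⊕ b belongs to X. -/

import Mathlib

/-- `a ⊕ b` is the smallest element of `ℕ \ X`, where
`X = {α ⊕ b : α < a} ∪ {a ⊕ β : β < b}`: it is not in `X`, and every `c < a ⊕ b`
belongs to `X`. -/
theorem nim_xor_smallest_not_mem (a b : ℕ) :
    a ^^^ b ∉ ({x | ∃ α : ℕ, α < a ∧ x = α ^^^ b} ∪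
      {x | ∃ β : ℕ, β < b ∧ x = a ^^^ β} : Set ℕ) ∧
    ∀ c : ℕ, c < a ^^^ b →
      c ∈ ({x | ∃ α : ℕ, α < a ∧ x = α ^^^ b} ∪
        {x | ∃ β : ℕ, β < b ∧ x = a ^^^ β} : Set ℕ) := by
  constructor
  · rintro (⟨α, hα, h⟩ | ⟨β, hβ, h⟩)
    · have : a = α := by
        have := congrArg (· ^^^ b) h
        simpa [xor_cancel_right] using this
      omega
    · have : b = β := by
        have := congrArg (a ^^^ ·) h
        simpa [xor_cancel_left] using this
      omega
  · intro c hc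
    rcases Nat.lt_xor_cases hc with h | h
    · exact Or.inl ⟨c ^^^ b, h, by simp [xor_cancel_right]⟩
    · exact Or.inr ⟨c ^^^ a, h, by
        rw [Nat.xor_comm c a, xor_cancel_left]⟩
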